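/- arXiv:1312.7014 — 4 statements merged into one kernel-verified Lean document; each statement's English description precedes it below -/
import Mathlib

section
/- Let G be a graph, W ⊆ V(G), and let G' be obtained from G by contracting every connected component of G − W to a single 'component vertex' (keeping W intact), with φ : V(G) → V(G') the corresponding quotient map. Then for every S ⊆ V(G'), the map φ induces a bijection between the connected components of G − φ⁻¹(S) and the connected components of G' − S. -/
/-- The annotated torso graph: vertices of `W` together with one vertex per
connected component of `G − W`; `W`-vertices keep their `G`-adjacency, a
`W`-vertex is adjacent to a component vertex iff it has a neighbor in that
component, and component vertices are pairwise non-adjacent. -/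
def atorsoGraph {V : Type} (G : SimpleGraph V) (W : Set V) :
    SimpleGraph (↥W ⊕ (G.induce Wᶜ).ConnectedComponent) where
  Adj a b :=
    match a, b with
    | Sum.inl w, Sum.inl w' => G.Adj ↑w ↑w'
    | Sum.inl w, Sum.inr c =>
        ∃ x, ∃ hx : x ∈ Wᶜ, G.Adj ↑w x ∧ (G.induce Wᶜ).connectedComponentMk ⟨x, hx⟩ = c
    | Sum.inr c, Sum.inl w =>
        ∃ x, ∃ hx : x ∈ Wᶜ, G.Adj ↑w x ∧ (G.induce Wᶜ).connectedComponentMk ⟨x, hx⟩ = c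
    | Sum.inr _, Sum.inr _ => False
  symm := by
    refine ⟨?_⟩
    rintro (w | c) (w' | c') h
    · exact h.symm
    · exact h
    · exact h
    · exact h
  loopless := by
    refine ⟨?_⟩
    rintro (w | c) h
    · exact G.irrefl h
    · exact h

open Classical in
/-- The quotient map onto the annotated torso: identity on `W`, and every
vertex outside `W` is mapped to the vertex of its connected component of `G − W`. -/
noncomputable def atorsoMap {V : Type} (G : SimpleGraph V) (W : Set V) (v : V) :
    ↥W ⊕ (G.induce Wᶜ).ConnectedComponent :=
  if h : v ∈ W then Sum.inl ⟨v, h⟩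
  else Sum.inr ((G.induce Wᶜ).connectedComponentMk ⟨v, h⟩)

section Aux

variable {V : Type} (G : SimpleGraph V) (W : Set V)
  (S : Set (↥W ⊕ (G.induce Wᶜ).ConnectedComponent))

lemma atorsoMap_mem {v : V} (h : v ∈ W) : atorsoMap G W v = Sum.inl ⟨v, h⟩ := dif_pos h

lemma atorsoMap_not_mem {v : V} (h : v ∉ W) :
    atorsoMap G W v = Sum.inr ((G.induce Wᶜ).connectedComponentMk ⟨v, h⟩) := dif_neg h

/-- `connectedComponentMk` only depends on the underlying element of a subtype. -/
lemma mk_congr' {α : Type} {s : Set α} (K : SimpleGraph ↥s) {a b : α} (h : a = b)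
    (ha : a ∈ s) (hb : b ∈ s) :
    K.connectedComponentMk ⟨a, ha⟩ = K.connectedComponentMk ⟨b, hb⟩ := by
  subst h; rfl

/-- Reachability inside `G − W` lifts to reachability inside `G − φ⁻¹(S)`. -/
lemma reach_lift {x y : ↥Wᶜ} (p : (G.induce Wᶜ).Walk x y)
    (hx : ↑x ∈ (atorsoMap G W ⁻¹' S)ᶜ) (hy : ↑y ∈ (atorsoMap G W ⁻¹' S)ᶜ) :
    (G.induce (atorsoMap G W ⁻¹' S)ᶜ).Reachable ⟨↑x, hx⟩ ⟨↑y, hy⟩ := by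
  induction p with
  | nil => exact SimpleGraph.Reachable.refl _
  | @cons a b c hab p ih =>
    have hb : ↑b ∈ (atorsoMap G W ⁻¹' S)ᶜ := by
      simp only [Set.mem_compl_iff, Set.mem_preimage] at hx ⊢
      rw [atorsoMap_not_mem G W b.2]
      rw [atorsoMap_not_mem G W a.2] at hx
      have : (G.induce Wᶜ).connectedComponentMk ⟨↑a, a.2⟩ =
          (G.induce Wᶜ).connectedComponentMk ⟨↑b, b.2⟩ := by
        exact SimpleGraph.ConnectedComponent.sound (by exact hab.reachable)
      rwa [this] at hx
    have hadj : (G.induce (atorsoMap G W ⁻¹' S)ᶜ).Adj ⟨↑a, hx⟩ ⟨↑b, hb⟩ := hab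
    exact hadj.reachable.trans (ih hb hy)

lemma walk_ind {α β : Type} (K : SimpleGraph α) (f : α → β)
    (h : ∀ u v, K.Adj u v → f u = f v) :
    ∀ (u v : α) (p : K.Walk u v), p.IsPath → f u = f v := by
  intro u v p hp
  clear hp
  induction p with
  | nil => rfl
  | cons hadj _ ih => exact (h _ _ hadj).trans ih

lemma fwdAux_adj (u v : ↥(atorsoMap G W ⁻¹' S)ᶜ)
    (h : (G.induce (atorsoMap G W ⁻¹' S)ᶜ).Adj u v) :
    ((atorsoGraph G W).induce Sᶜ).connectedComponentMk ⟨atorsoMap G W ↑u, u.2⟩ =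
      ((atorsoGraph G W).induce Sᶜ).connectedComponentMk ⟨atorsoMap G W ↑v, v.2⟩ := by
  have hG : G.Adj ↑u ↑v := h
  by_cases hu : (u : V) ∈ W <;> by_cases hv : (v : V) ∈ W
  · refine SimpleGraph.ConnectedComponent.sound ?_
    refine SimpleGraph.Adj.reachable ?_
    show (atorsoGraph G W).Adj (atorsoMap G W ↑u) (atorsoMap G W ↑v)
    rw [atorsoMap_mem G W hu, atorsoMap_mem G W hv]
    exact hG
  · refine SimpleGraph.ConnectedComponent.sound ?_
    refine SimpleGraph.Adj.reachable ?_
    show (atorsoGraph G W).Adj (atorsoMap G W ↑u) (atorsoMap G W ↑v)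
    rw [atorsoMap_mem G W hu, atorsoMap_not_mem G W hv]
    exact ⟨↑v, hv, hG, rfl⟩
  · refine SimpleGraph.ConnectedComponent.sound ?_
    refine SimpleGraph.Adj.reachable ?_
    show (atorsoGraph G W).Adj (atorsoMap G W ↑u) (atorsoMap G W ↑v)
    rw [atorsoMap_not_mem G W hu, atorsoMap_mem G W hv]
    exact ⟨↑u, hu, hG.symm, rfl⟩
  · have : atorsoMap G W ↑u = atorsoMap G W ↑v := by
      rw [atorsoMap_not_mem G W hu, atorsoMap_not_mem G W hv]
      congr 1
      exact SimpleGraph.ConnectedComponent.sound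
        (SimpleGraph.Adj.reachable (by exact hG : (G.induce Wᶜ).Adj ⟨↑u, hu⟩ ⟨↑v, hv⟩))
    exact mk_congr' _ this _ _

/-- The forward map on components. -/
noncomputable def fwd : (G.induce (atorsoMap G W ⁻¹' S)ᶜ).ConnectedComponent →
    ((atorsoGraph G W).induce Sᶜ).ConnectedComponent :=
  SimpleGraph.ConnectedComponent.lift
    (fun u => ((atorsoGraph G W).induce Sᶜ).connectedComponentMk ⟨atorsoMap G W ↑u, u.2⟩)
    (walk_ind _ _ (fwdAux_adj G W S))

lemma mem_of_inl {w : ↥W} (h : Sum.inl w ∈ Sᶜ) : ↑w ∈ (atorsoMap G W ⁻¹' S)ᶜ := by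
  simp only [Set.mem_compl_iff, Set.mem_preimage]
  rw [atorsoMap_mem G W w.2]
  exact h

lemma mem_of_inr {c : (G.induce Wᶜ).ConnectedComponent} (h : Sum.inr c ∈ Sᶜ) :
    ↑(Quot.out c) ∈ (atorsoMap G W ⁻¹' S)ᶜ := by
  simp only [Set.mem_compl_iff, Set.mem_preimage]
  rw [atorsoMap_not_mem G W (Quot.out c).2]
  have : (G.induce Wᶜ).connectedComponentMk ⟨↑(Quot.out c), (Quot.out c).2⟩ = c := by
    have := Quot.out_eq c
    exact this
  rw [this]
  exact h

/-- Representative map from torso-vertices avoiding `S` back to `G`-components. -/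
noncomputable def bwdAux : ↥Sᶜ → (G.induce (atorsoMap G W ⁻¹' S)ᶜ).ConnectedComponent :=
  fun a =>
    match a with
    | ⟨Sum.inl w, h⟩ =>
        (G.induce (atorsoMap G W ⁻¹' S)ᶜ).connectedComponentMk ⟨↑w, mem_of_inl G W S h⟩
    | ⟨Sum.inr c, h⟩ =>
        (G.induce (atorsoMap G W ⁻¹' S)ᶜ).connectedComponentMk
          ⟨↑(Quot.out c), mem_of_inr G W S h⟩

lemma bwdAux_adj (a b : ↥Sᶜ) (h : ((atorsoGraph G W).induce Sᶜ).Adj a b) :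
    bwdAux G W S a = bwdAux G W S b := by
  have key : ∀ (w : ↥W) (c : (G.induce Wᶜ).ConnectedComponent)
      (hw : Sum.inl w ∈ Sᶜ) (hc : Sum.inr c ∈ Sᶜ),
      (atorsoGraph G W).Adj (Sum.inl w) (Sum.inr c) →
      (G.induce (atorsoMap G W ⁻¹' S)ᶜ).connectedComponentMk ⟨↑w, mem_of_inl G W S hw⟩ =
        (G.induce (atorsoMap G W ⁻¹' S)ᶜ).connectedComponentMk
          ⟨↑(Quot.out c), mem_of_inr G W S hc⟩ := by
    intro w c hw hc hadj
    obtain ⟨x, hx, hGadj, hcomp⟩ := hadj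
    have hxmem : x ∈ (atorsoMap G W ⁻¹' S)ᶜ := by
      simp only [Set.mem_compl_iff, Set.mem_preimage]
      rw [atorsoMap_not_mem G W hx, hcomp]
      exact hc
    refine SimpleGraph.ConnectedComponent.sound ?_
    have h1 : (G.induce (atorsoMap G W ⁻¹' S)ᶜ).Adj
        ⟨↑w, mem_of_inl G W S hw⟩ ⟨x, hxmem⟩ := hGadj
    have h2 : (G.induce Wᶜ).Reachable ⟨x, hx⟩ (Quot.out c) := by
      apply SimpleGraph.ConnectedComponent.exact
      rw [hcomp]
      have : (G.induce Wᶜ).connectedComponentMk (Quot.out c) = c := by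
        have := Quot.out_eq c; exact this
      rw [this]
    obtain ⟨p⟩ := h2
    exact h1.reachable.trans (reach_lift G W S p hxmem (mem_of_inr G W S hc))
  obtain ⟨a, ha⟩ := a
  obtain ⟨b, hb⟩ := b
  have hadj : (atorsoGraph G W).Adj a b := h
  match a, b with
  | Sum.inl w, Sum.inl w' =>
    refine SimpleGraph.ConnectedComponent.sound (SimpleGraph.Adj.reachable ?_)
    exact (hadj : G.Adj ↑w ↑w')
  | Sum.inl w, Sum.inr c => exact key w c ha hb hadj
  | Sum.inr c, Sum.inl w => exact (key w c hb ha hadj.symm).symm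
  | Sum.inr c, Sum.inr c' => exact absurd hadj (by simp [atorsoGraph])

/-- The backward map on components. -/
noncomputable def bwd : ((atorsoGraph G W).induce Sᶜ).ConnectedComponent →
    (G.induce (atorsoMap G W ⁻¹' S)ᶜ).ConnectedComponent :=
  SimpleGraph.ConnectedComponent.lift (bwdAux G W S) (walk_ind _ _ (bwdAux_adj G W S))

end Aux

/-- For every `S`, the map `φ` induces a bijection between the connected
components of `G − φ⁻¹(S)` and the connected components of `G' − S`. -/
theorem stmt1 {V : Type} (G : SimpleGraph V) (W : Set V)
    (S : Set (↥W ⊕ (G.induce Wᶜ).ConnectedComponent)) :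
    ∃ e : (G.induce (atorsoMap G W ⁻¹' S)ᶜ).ConnectedComponent ≃
          ((atorsoGraph G W).induce Sᶜ).ConnectedComponent,
      ∀ (v : V) (hv : v ∈ (atorsoMap G W ⁻¹' S)ᶜ),
        e ((G.induce (atorsoMap G W ⁻¹' S)ᶜ).connectedComponentMk ⟨v, hv⟩) =
          ((atorsoGraph G W).induce Sᶜ).connectedComponentMk
            ⟨atorsoMap G W v, by simpa using hv⟩ := by
  refine ⟨⟨fwd G W S, bwd G W S, ?_, ?_⟩, fun v hv => rfl⟩
  · refine SimpleGraph.ConnectedComponent.ind ?_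
    rintro ⟨v, hv⟩
    show bwdAux G W S ⟨atorsoMap G W v, hv⟩ =
      (G.induce (atorsoMap G W ⁻¹' S)ᶜ).connectedComponentMk ⟨v, hv⟩
    by_cases hvW : v ∈ W
    · have hS : Sum.inl (⟨v, hvW⟩ : ↥W) ∈ Sᶜ := by
        have h := hv
        simp only [Set.mem_compl_iff, Set.mem_preimage] at h
        rwa [atorsoMap_mem G W hvW] at h
      rw [show (⟨atorsoMap G W v, hv⟩ : ↥Sᶜ) = ⟨Sum.inl ⟨v, hvW⟩, hS⟩ from
        Subtype.ext (atorsoMap_mem G W hvW)]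
      rfl
    · have hS : Sum.inr ((G.induce Wᶜ).connectedComponentMk ⟨v, hvW⟩) ∈ Sᶜ := by
        have h := hv
        simp only [Set.mem_compl_iff, Set.mem_preimage] at h
        rwa [atorsoMap_not_mem G W hvW] at h
      rw [show (⟨atorsoMap G W v, hv⟩ : ↥Sᶜ) =
          ⟨Sum.inr ((G.induce Wᶜ).connectedComponentMk ⟨v, hvW⟩), hS⟩ from
        Subtype.ext (atorsoMap_not_mem G W hvW)]
      show (G.induce (atorsoMap G W ⁻¹' S)ᶜ).connectedComponentMk
          ⟨↑(Quot.out ((G.induce Wᶜ).connectedComponentMk ⟨v, hvW⟩)), _⟩ = _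
      refine SimpleGraph.ConnectedComponent.sound ?_
      have hr : (G.induce Wᶜ).Reachable
          (Quot.out ((G.induce Wᶜ).connectedComponentMk ⟨v, hvW⟩)) ⟨v, hvW⟩ := by
        apply SimpleGraph.ConnectedComponent.exact
        exact Quot.out_eq _
      obtain ⟨p⟩ := hr
      exact reach_lift G W S p (mem_of_inr G W S hS) hv
  · refine SimpleGraph.ConnectedComponent.ind ?_
    rintro ⟨a, ha⟩
    match a, ha with
    | Sum.inl w, ha =>
      show fwd G W S ((G.induce (atorsoMap G W ⁻¹' S)ᶜ).connectedComponentMk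
        ⟨↑w, mem_of_inl G W S ha⟩) = _
      show ((atorsoGraph G W).induce Sᶜ).connectedComponentMk
        ⟨atorsoMap G W ↑w, _⟩ = _
      exact mk_congr' _ (by rw [atorsoMap_mem G W w.2]) _ _
    | Sum.inr c, ha =>
      show fwd G W S ((G.induce (atorsoMap G W ⁻¹' S)ᶜ).connectedComponentMk
        ⟨↑(Quot.out c), mem_of_inr G W S ha⟩) = _
      show ((atorsoGraph G W).induce Sᶜ).connectedComponentMk
        ⟨atorsoMap G W ↑(Quot.out c), _⟩ = _
      refine mk_congr' _ ?_ _ _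
      rw [atorsoMap_not_mem G W (Quot.out c).2]
      congr 1
      exact Quot.out_eq c
end

section
/- For every graph G and vertex subsets C, X ⊆ V(G), the treewidth of torso(G, C ∪ X) is at most the treewidth of torso(G, C) plus |X|. -/
/-- The torso of `G` with respect to `W`: the graph on `W` where two vertices are
adjacent iff they are adjacent in `G` or joined by a path internally avoiding `W`
(equivalently, both have neighbors in a common component of `G − W`). -/
def torso {V : Type} (G : SimpleGraph V) (W : Set V) : SimpleGraph ↥W where
  Adj u v := u ≠ v ∧ (G.Adj ↑u ↑v ∨
    ∃ x y, ∃ hx : x ∈ Wᶜ, ∃ hy : y ∈ Wᶜ, G.Adj ↑u x ∧ G.Adj ↑v y ∧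
      (G.induce Wᶜ).Reachable ⟨x, hx⟩ ⟨y, hy⟩)
  symm := by
    refine ⟨?_⟩
    rintro u v ⟨hne, h⟩
    refine ⟨hne.symm, ?_⟩
    rcases h with h | ⟨x, y, hx, hy, hux, hvy, hr⟩
    · exact Or.inl h.symm
    · exact Or.inr ⟨y, x, hy, hx, hvy, hux, hr.symm⟩
  loopless := by refine ⟨?_⟩; rintro u ⟨hne, -⟩; exact hne rfl

/-- `(T, τ)` is a tree decomposition of `G`. -/
def IsTreeDecomp {V β : Type} (G : SimpleGraph V) (T : SimpleGraph β)
    (τ : β → Set V) : Prop :=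
  T.IsTree ∧ (∀ u v, G.Adj u v → ∃ t, u ∈ τ t ∧ v ∈ τ t) ∧
    (∀ v, ∃ t, v ∈ τ t) ∧ ∀ v, (T.induce {t | v ∈ τ t}).Connected

/-- The treewidth of a graph: the minimum over all tree decompositions of
(maximum bag size − 1). -/
noncomputable def treewidth {V : Type} (G : SimpleGraph V) : ℕ :=
  sInf {w | ∃ (β : Type) (T : SimpleGraph β) (τ : β → Set V),
    IsTreeDecomp G T τ ∧ ∀ t, (τ t).ncard ≤ w + 1}

open SimpleGraph Set in
/-- Hom between induced subgraphs along a set inclusion. -/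
private def inducedHomOfSubset {V : Type} (G : SimpleGraph V) {A B : Set V} (h : A ⊆ B) :
    G.induce A →g G.induce B where
  toFun v := ⟨v.1, h v.2⟩
  map_rel' := fun hadj => hadj

private lemma tw_set_nonempty {V : Type} [Finite V] (G : SimpleGraph V) :
    {w | ∃ (β : Type) (T : SimpleGraph β) (τ : β → Set V),
      IsTreeDecomp G T τ ∧ ∀ t, (τ t).ncard ≤ w + 1}.Nonempty := by
  refine ⟨(Set.univ : Set V).ncard, Unit, ⊥, fun _ => Set.univ, ⟨?_, ?_, ?_, ?_⟩, ?_⟩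
  · have : Nonempty Unit := ⟨()⟩
    exact ⟨⟨fun u v => by rw [Subsingleton.elim u v]⟩, SimpleGraph.isAcyclic_bot⟩
  · exact fun u v _ => ⟨(), trivial, trivial⟩
  · exact fun v => ⟨(), trivial⟩
  · intro v
    have : Nonempty {t : Unit | v ∈ (Set.univ : Set V)} := ⟨⟨(), trivial⟩⟩
    exact ⟨fun u w => by rw [Subsingleton.elim u w]⟩
  · exact fun t => Nat.le_succ _

/-- `tw(torso(G, C ∪ X)) ≤ tw(torso(G, C)) + |X|`. -/
theorem stmt4 {V : Type} [Finite V] (G : SimpleGraph V) (C X : Set V) :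
    treewidth (torso G (C ∪ X)) ≤ treewidth (torso G C) + X.ncard := by
  classical
  have hmem : treewidth (torso G C) ∈ {w | ∃ (β : Type) (T : SimpleGraph β)
      (τ : β → Set ↥C), IsTreeDecomp (torso G C) T τ ∧ ∀ t, (τ t).ncard ≤ w + 1} :=
    Nat.sInf_mem (tw_set_nonempty _)
  obtain ⟨β, T, τ, ⟨htree, hadj, hcov, hconn⟩, hsize⟩ := hmem
  have hβ : Nonempty β := htree.isConnected.nonempty
  set w := treewidth (torso G C) with hw
  -- the new bags
  set τ' : β → Set ↥(C ∪ X) :=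
    fun t => {v : ↥(C ∪ X) | ↑v ∈ X ∨ ∃ h : ↑v ∈ C, (⟨↑v, h⟩ : ↥C) ∈ τ t} with hτ'
  -- covering
  have hcov' : ∀ v : ↥(C ∪ X), ∃ t, v ∈ τ' t := by
    intro v
    by_cases hx : ↑v ∈ X
    · exact ⟨Classical.arbitrary β, Or.inl hx⟩
    · have hvC : ↑v ∈ C := v.2.resolve_right hx
      obtain ⟨t, ht⟩ := hcov ⟨↑v, hvC⟩
      exact ⟨t, Or.inr ⟨hvC, ht⟩⟩
  apply Nat.sInf_le
  refine ⟨β, T, τ', ⟨htree, ?_, hcov', ?_⟩, ?_⟩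
  · -- adjacency
    intro u v huv
    by_cases hux : ↑u ∈ X
    · obtain ⟨t, ht⟩ := hcov' v
      exact ⟨t, Or.inl hux, ht⟩
    by_cases hvx : ↑v ∈ X
    · obtain ⟨t, ht⟩ := hcov' u
      exact ⟨t, ht, Or.inl hvx⟩
    have huC : ↑u ∈ C := u.2.resolve_right hux
    have hvC : ↑v ∈ C := v.2.resolve_right hvx
    have hsub : (C ∪ X)ᶜ ⊆ Cᶜ := Set.compl_subset_compl.mpr Set.subset_union_left
    have hadj2 : (torso G C).Adj ⟨↑u, huC⟩ ⟨↑v, hvC⟩ := by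
      obtain ⟨hne, h⟩ := huv
      have hne' : (↑u : V) ≠ ↑v := fun h => hne (Subtype.ext h)
      refine ⟨fun he => hne' (Subtype.mk_eq_mk.mp he), ?_⟩
      rcases h with h | ⟨x, y, hx, hy, hux', hvy', hr⟩
      · exact Or.inl h
      · refine Or.inr ⟨x, y, hsub hx, hsub hy, hux', hvy', ?_⟩
        exact hr.map (inducedHomOfSubset G hsub)
    obtain ⟨t, ht1, ht2⟩ := hadj _ _ hadj2
    exact ⟨t, Or.inr ⟨huC, ht1⟩, Or.inr ⟨hvC, ht2⟩⟩
  · -- connectivity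
    intro v
    by_cases hx : ↑v ∈ X
    · have hset : {t | v ∈ τ' t} = Set.univ := by
        ext t; simp [hτ', hx]
      rw [hset]
      exact (SimpleGraph.induceUnivIso T).connected_iff.mpr htree.isConnected
    · have hvC : ↑v ∈ C := v.2.resolve_right hx
      have hset : {t | v ∈ τ' t} = {t | (⟨↑v, hvC⟩ : ↥C) ∈ τ t} := by
        ext t
        simp only [hτ', Set.mem_setOf_eq, hx, false_or]
        exact ⟨fun ⟨h, hm⟩ => hm, fun hm => ⟨hvC, hm⟩⟩
      rw [hset]
      exact hconn _
  · -- size bound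
    intro t
    have hsplit : τ' t = {v : ↥(C ∪ X) | ∃ h : ↑v ∈ C, (⟨↑v, h⟩ : ↥C) ∈ τ t}
        ∪ {v : ↥(C ∪ X) | ↑v ∈ X} := by
      ext v; simp [hτ', or_comm]
    set A : Set ↥(C ∪ X) := {v | ∃ h : ↑v ∈ C, (⟨↑v, h⟩ : ↥C) ∈ τ t}
    set B : Set ↥(C ∪ X) := {v | ↑v ∈ X}
    have hA : A.ncard ≤ (τ t).ncard := by
      have h1 : (Subtype.val '' A).ncard = A.ncard :=
        Set.ncard_image_of_injective _ Subtype.val_injective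
      have h2 : (Subtype.val '' (τ t)).ncard = (τ t).ncard :=
        Set.ncard_image_of_injective _ Subtype.val_injective
      have h3 : Subtype.val '' A ⊆ Subtype.val '' (τ t) := by
        rintro x ⟨v, ⟨h, hm⟩, rfl⟩
        exact ⟨⟨↑v, h⟩, hm, rfl⟩
      calc A.ncard = (Subtype.val '' A).ncard := h1.symm
        _ ≤ (Subtype.val '' (τ t)).ncard := Set.ncard_le_ncard h3 (Set.toFinite _)
        _ = (τ t).ncard := h2
    have hB : B.ncard ≤ X.ncard := by
      have h1 : (Subtype.val '' B).ncard = B.ncard :=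
        Set.ncard_image_of_injective _ Subtype.val_injective
      have h3 : Subtype.val '' B ⊆ X := by rintro x ⟨v, hv, rfl⟩; exact hv
      calc B.ncard = (Subtype.val '' B).ncard := h1.symm
        _ ≤ X.ncard := Set.ncard_le_ncard h3 (Set.toFinite _)
    calc (τ' t).ncard = (A ∪ B).ncard := by rw [hsplit]
      _ ≤ A.ncard + B.ncard := Set.ncard_union_le _ _
      _ ≤ ((τ t).ncard) + X.ncard := Nat.add_le_add hA hB
      _ ≤ (w + 1) + X.ncard := Nat.add_le_add_right (hsize t) _
      _ = (w + X.ncard) + 1 := by omega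
end

section
/- Let G be a graph consisting of two disjoint cliques each on more than k vertices, plus additional vertices each of degree exactly two with both neighbors in the first clique, such that any two clique vertices have at most one common degree-two neighbor. Then for every vertex set S ⊆ V(G) with |S| ≤ k, the graph G − S has at most C(|S|, 2) + 2 connected components. -/
open Classical

/-- A graph made of two disjoint cliques on more than `k` vertices each, plus
degree-two vertices with both neighbors in the first clique, any two clique
vertices sharing at most one such common neighbor, falls into at most
`C(|S|,2) + 2` connected components after deleting any set `S` of at most `k`
vertices. -/
theorem stmt9 {V : Type} [Fintype V] (G : SimpleGraph V) (k : ℕ)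
    (K1 K2 : Set V) (hdisj : Disjoint K1 K2)
    (hc1 : G.IsClique K1) (hc2 : G.IsClique K2)
    (hk1 : k < K1.ncard) (hk2 : k < K2.ncard)
    (hsep : ∀ u ∈ K1, ∀ v ∈ K2, ¬ G.Adj u v)
    (hdeg : ∀ r, r ∉ K1 → r ∉ K2 →
      (G.neighborSet r).ncard = 2 ∧ G.neighborSet r ⊆ K1)
    (hcommon : ∀ u ∈ K1, ∀ v ∈ K1, u ≠ v →
      ({r | r ∉ K1 ∧ r ∉ K2 ∧ G.Adj r u ∧ G.Adj r v}).ncard ≤ 1) :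
    ∀ S : Set V, S.ncard ≤ k →
      Nat.card ((G.induce Sᶜ).ConnectedComponent) ≤ Nat.choose S.ncard 2 + 2 := by
  intro S hS
  -- pick a ∈ K1 \ S and b ∈ K2 \ S
  have hK1S : (K1 \ S).Nonempty := by
    rw [Set.diff_nonempty]
    intro h
    exact absurd (Set.ncard_le_ncard h (Set.toFinite S)) (by omega)
  have hK2S : (K2 \ S).Nonempty := by
    rw [Set.diff_nonempty]
    intro h
    exact absurd (Set.ncard_le_ncard h (Set.toFinite S)) (by omega)
  obtain ⟨a, haK1, haS⟩ := hK1S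
  obtain ⟨b, hbK2, hbS⟩ := hK2S
  have haC : a ∈ Sᶜ := haS
  have hbC : b ∈ Sᶜ := hbS
  set H := G.induce Sᶜ with hH
  -- reachability to a within K1 \ S
  have hreach1 : ∀ x (hx : x ∈ Sᶜ), x ∈ K1 →
      H.Reachable ⟨x, hx⟩ ⟨a, haC⟩ := by
    intro x hx hxK
    by_cases hxa : x = a
    · subst hxa; exact SimpleGraph.Reachable.refl _
    · exact SimpleGraph.Adj.reachable (show G.Adj x a from hc1 hxK haK1 hxa)
  have hreach2 : ∀ x (hx : x ∈ Sᶜ), x ∈ K2 →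
      H.Reachable ⟨x, hx⟩ ⟨b, hbC⟩ := by
    intro x hx hxK
    by_cases hxb : x = b
    · subst hxb; exact SimpleGraph.Reachable.refl _
    · exact SimpleGraph.Adj.reachable (show G.Adj x b from hc2 hxK hbK2 hxb)
  set T : Set V := {r | r ∉ S ∧ r ∉ K1 ∧ r ∉ K2 ∧ G.neighborSet r ⊆ S} with hT
  -- surjection from T ⊕ Bool onto components
  let f : (↥T ⊕ Bool) → H.ConnectedComponent := fun x =>
    match x with
    | Sum.inl r => H.connectedComponentMk ⟨r.1, r.2.1⟩
    | Sum.inr true => H.connectedComponentMk ⟨a, haC⟩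
    | Sum.inr false => H.connectedComponentMk ⟨b, hbC⟩
  have hfsurj : Function.Surjective f := by
    intro C
    induction C using SimpleGraph.ConnectedComponent.ind with
    | _ v =>
      obtain ⟨v, hv⟩ := v
      by_cases hv1 : v ∈ K1
      · exact ⟨Sum.inr true, (SimpleGraph.ConnectedComponent.sound (hreach1 v hv hv1)).symm⟩
      by_cases hv2 : v ∈ K2
      · exact ⟨Sum.inr false, (SimpleGraph.ConnectedComponent.sound (hreach2 v hv hv2)).symm⟩
      obtain ⟨h2, hsub⟩ := hdeg v hv1 hv2
      by_cases hall : G.neighborSet v ⊆ S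
      · exact ⟨Sum.inl ⟨v, hv, hv1, hv2, hall⟩, rfl⟩
      · rw [Set.not_subset] at hall
        obtain ⟨u, huN, huS⟩ := hall
        have huK : u ∈ K1 := hsub huN
        have huC : u ∈ Sᶜ := huS
        refine ⟨Sum.inr true, (SimpleGraph.ConnectedComponent.sound ?_).symm⟩
        exact (SimpleGraph.Adj.reachable
          (show H.Adj ⟨v, hv⟩ ⟨u, huC⟩ from huN)).trans (hreach1 u huC huK)
  have hb1 : Nat.card H.ConnectedComponent ≤ Nat.card (↥T ⊕ Bool) :=
    Nat.card_le_card_of_surjective f hfsurj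
  have hb2 : Nat.card (↥T ⊕ Bool) = T.ncard + 2 := by
    rw [Nat.card_sum, Nat.card_coe_set_eq]
    simp [Nat.card_eq_fintype_card]
  -- bound |T| by C(|S|,2)
  have hTbound : T.ncard ≤ Nat.choose S.ncard 2 := by
    let F : ↥T → {A : Finset V // A ∈ S.toFinset.powersetCard 2} := fun r =>
      ⟨(G.neighborSet r.1).toFinset, by
        obtain ⟨r, hrS, hr1, hr2, hrsub⟩ := r
        rw [Finset.mem_powersetCard]
        constructor
        · intro x hx
          rw [Set.mem_toFinset] at hx
          exact Set.mem_toFinset.mpr (hrsub hx)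
        · rw [← Set.ncard_eq_toFinset_card']
          exact (hdeg r hr1 hr2).1⟩
    have hFinj : Function.Injective F := by
      intro r r' hrr'
      have hEq : G.neighborSet r.1 = G.neighborSet r'.1 := by
        have := congrArg Subtype.val hrr'
        simpa [F, Set.toFinset_inj] using this
      obtain ⟨hrS, hr1, hr2, hrsub⟩ := r.2
      obtain ⟨hrS', hr1', hr2', hrsub'⟩ := r'.2
      obtain ⟨hc2', hsub2⟩ := hdeg r.1 hr1 hr2
      obtain ⟨u, v, huv, hset⟩ := Set.ncard_eq_two.mp hc2'
      have huK : u ∈ K1 := hsub2 (by rw [hset]; exact Set.mem_insert u {v})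
      have hvK : v ∈ K1 := hsub2 (by rw [hset]; simp)
      have hru : G.Adj r.1 u := by
        have : u ∈ G.neighborSet r.1 := by rw [hset]; exact Set.mem_insert u {v}
        exact this
      have hrv : G.Adj r.1 v := by
        have : v ∈ G.neighborSet r.1 := by rw [hset]; simp
        exact this
      have hru' : G.Adj r'.1 u := by
        have : u ∈ G.neighborSet r'.1 := by rw [← hEq, hset]; exact Set.mem_insert u {v}
        exact this
      have hrv' : G.Adj r'.1 v := by
        have : v ∈ G.neighborSet r'.1 := by rw [← hEq, hset]; simp
        exact this
      have hcc := hcommon u huK v hvK huv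
      have hmem : r.1 ∈ {x | x ∉ K1 ∧ x ∉ K2 ∧ G.Adj x u ∧ G.Adj x v} :=
        ⟨hr1, hr2, hru, hrv⟩
      have hmem' : r'.1 ∈ {x | x ∉ K1 ∧ x ∉ K2 ∧ G.Adj x u ∧ G.Adj x v} :=
        ⟨hr1', hr2', hru', hrv'⟩
      have := (Set.ncard_le_one (Set.toFinite _)).mp hcc _ hmem _ hmem'
      exact Subtype.ext this
    calc T.ncard = Nat.card ↥T := (Nat.card_coe_set_eq T).symm
      _ ≤ Nat.card {A : Finset V // A ∈ S.toFinset.powersetCard 2} :=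
          Nat.card_le_card_of_injective F hFinj
      _ = (S.toFinset.powersetCard 2).card := by
          rw [Nat.card_eq_fintype_card]; exact Fintype.card_coe _
      _ = Nat.choose S.ncard 2 := by
          rw [Finset.card_powersetCard, Set.ncard_eq_toFinset_card']
  omega
end

section
/- Let G be a graph on n vertices with m edges and k an even positive integer. Construct G' from G by: subdividing each edge (replacing {u,w} by a new vertex v_{u,w} adjacent to u and w), making the original vertex set V(G) into a clique, and adding a disjoint clique D on n + m − k − 2·C(k,2) vertices. If C ⊆ V(G) is a clique of size k in G, then setting A = V(G') ∖ (C ∪ V^E_C ∪ D) and B = D ∪ V^E_C, where V^E_C is the set of subdivision vertices of edges inside C, yields |A| = |B| and no edges between A and B in G'; i.e., C is a balanced separator of G'. -/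
/-- The graph `G'` of the reduction from Bisection to Vertex Bisection:
the original vertices form a clique, each edge of `G` is subdivided by an edge
vertex adjacent to its two endpoints, and a disjoint clique on `D` vertices is
added. -/
def bisectionGraph {V : Type} (G : SimpleGraph V) (D : ℕ) :
    SimpleGraph (V ⊕ (↥G.edgeSet ⊕ Fin D)) where
  Adj a b :=
    match a, b with
    | Sum.inl u, Sum.inl v => u ≠ v
    | Sum.inl u, Sum.inr (Sum.inl e) => u ∈ (e : Sym2 V)
    | Sum.inr (Sum.inl e), Sum.inl u => u ∈ (e : Sym2 V)
    | Sum.inr (Sum.inr d), Sum.inr (Sum.inr d') => d ≠ d'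
    | _, _ => False
  symm := by
    constructor
    rintro (u | e | d) (v | f | d') h
    · exact h.symm
    · exact h
    · exact h
    · exact h
    · exact h
    · exact h
    · exact h
    · exact h
    · exact h.symm
  loopless := by
    constructor
    rintro (u | e | d) h
    · exact h rfl
    · exact h
    · exact h rfl

/-- The part `A`: non-clique original vertices and edge vertices of edges not
inside `C`. -/
def partA {V : Type} (G : SimpleGraph V) (D : ℕ) (C : Set V) :
    Set (V ⊕ (↥G.edgeSet ⊕ Fin D)) :=
  {x | ∃ v, x = Sum.inl v ∧ v ∉ C} ∪
    {x | ∃ e : ↥G.edgeSet, x = Sum.inr (Sum.inl e) ∧ ¬ ∀ v ∈ (e : Sym2 V), v ∈ C}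

/-- The part `B`: the added clique together with the edge vertices of the edges
inside `C`. -/
def partB {V : Type} (G : SimpleGraph V) (D : ℕ) (C : Set V) :
    Set (V ⊕ (↥G.edgeSet ⊕ Fin D)) :=
  {x | ∃ e : ↥G.edgeSet, x = Sum.inr (Sum.inl e) ∧ ∀ v ∈ (e : Sym2 V), v ∈ C} ∪
    {x | ∃ d : Fin D, x = Sum.inr (Sum.inr d)}

lemma edge_count_clique {V : Type} [Fintype V] (G : SimpleGraph V)
    (C : Set V) (hC : G.IsClique C) :
    {e : ↥G.edgeSet | ∀ v ∈ (e : Sym2 V), v ∈ C}.ncard = C.ncard.choose 2 := by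
  classical
  haveI : Fintype ↥C := C.toFinite.fintype
  set E₁ : Set ↥G.edgeSet := {e : ↥G.edgeSet | ∀ v ∈ (e : Sym2 V), v ∈ C}
  have h1 : E₁.ncard = ((Subtype.val : ↥G.edgeSet → Sym2 V) '' E₁).ncard :=
    (Set.ncard_image_of_injective _ Subtype.val_injective).symm
  have him : Sym2.map (Subtype.val : ↥C → V) '' (⊤ : SimpleGraph ↥C).edgeSet
      = (Subtype.val : ↥G.edgeSet → Sym2 V) '' E₁ := by
    ext q
    constructor
    · rintro ⟨p, hp, rfl⟩
      induction p with
      | _ a b =>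
        have hab' : a ≠ b := by simpa using hp
        have hab : (a : V) ≠ b := fun h => hab' (Subtype.ext h)
        have hadj : G.Adj a b := hC a.2 b.2 hab
        refine ⟨⟨s(↑a, ↑b), hadj⟩, ?_, rfl⟩
        intro v hv
        rcases Sym2.mem_iff.mp hv with rfl | rfl
        · exact a.2
        · exact b.2
    · rintro ⟨⟨q, hq⟩, hmem, rfl⟩
      induction q with
      | _ u v =>
        have hadj : G.Adj u v := hq
        have hu : u ∈ C := hmem u (Sym2.mem_mk_left u v)
        have hv : v ∈ C := hmem v (Sym2.mem_mk_right u v)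
        refine ⟨s(⟨u, hu⟩, ⟨v, hv⟩), ?_, rfl⟩
        simpa using hadj.ne
  have h2 : ((⊤ : SimpleGraph ↥C).edgeSet).ncard = C.ncard.choose 2 := by
    rw [Set.ncard_eq_toFinset_card', ← SimpleGraph.edgeFinset]
    rw [SimpleGraph.card_edgeFinset_top_eq_card_choose_two]
    congr 1
    rw [Set.ncard_eq_toFinset_card', Set.toFinset_card]
  rw [h1, ← him, Set.ncard_image_of_injective _ (Sym2.map.injective Subtype.val_injective), h2]


/-- If `C` is a clique of size `k` in `G`, then in `G'` (with
`D = n + m − k − 2·C(k,2)`) the sets `A` and `B` have equal size and no edges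
between them: `C` is a balanced separator of `G'`. -/
theorem stmt10 {V : Type} [Fintype V] (G : SimpleGraph V) (k : ℕ)
    (hkpos : 0 < k) (hkeven : Even k)
    (hsize : k + 2 * Nat.choose k 2 ≤ Fintype.card V + Nat.card G.edgeSet)
    (C : Set V) (hC : G.IsClique C) (hCk : C.ncard = k) :
    (partA G (Fintype.card V + Nat.card G.edgeSet - k - 2 * Nat.choose k 2) C).ncard
        = (partB G (Fintype.card V + Nat.card G.edgeSet - k - 2 * Nat.choose k 2) C).ncard
      ∧ ∀ a ∈ partA G (Fintype.card V + Nat.card G.edgeSet - k - 2 * Nat.choose k 2) C,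
        ∀ b ∈ partB G (Fintype.card V + Nat.card G.edgeSet - k - 2 * Nat.choose k 2) C,
          ¬ (bisectionGraph G (Fintype.card V + Nat.card G.edgeSet - k - 2 * Nat.choose k 2)).Adj a b := by
  classical
  set n := Fintype.card V with hn
  set m := Nat.card G.edgeSet with hm
  set D := n + m - k - 2 * Nat.choose k 2 with hD
  set E₁ : Set ↥G.edgeSet := {e : ↥G.edgeSet | ∀ v ∈ (e : Sym2 V), v ∈ C} with hE₁
  have hE₁card : E₁.ncard = Nat.choose k 2 := by
    rw [hE₁, edge_count_clique G C hC, hCk]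
  constructor
  · -- counting
    have hS1 : {x : V ⊕ (↥G.edgeSet ⊕ Fin D) | ∃ v, x = Sum.inl v ∧ v ∉ C}
        = Sum.inl '' Cᶜ := by
      ext x
      constructor
      · rintro ⟨v, rfl, hv⟩; exact ⟨v, hv, rfl⟩
      · rintro ⟨v, hv, rfl⟩; exact ⟨v, rfl, hv⟩
    have hS2 : {x : V ⊕ (↥G.edgeSet ⊕ Fin D) |
          ∃ e : ↥G.edgeSet, x = Sum.inr (Sum.inl e) ∧ ¬ ∀ v ∈ (e : Sym2 V), v ∈ C}
        = (fun e : ↥G.edgeSet => (Sum.inr (Sum.inl e) : V ⊕ (↥G.edgeSet ⊕ Fin D))) '' E₁ᶜ := by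
      ext x
      constructor
      · rintro ⟨e, rfl, he⟩; exact ⟨e, he, rfl⟩
      · rintro ⟨e, he, rfl⟩; exact ⟨e, rfl, he⟩
    have hT1 : {x : V ⊕ (↥G.edgeSet ⊕ Fin D) |
          ∃ e : ↥G.edgeSet, x = Sum.inr (Sum.inl e) ∧ ∀ v ∈ (e : Sym2 V), v ∈ C}
        = (fun e : ↥G.edgeSet => (Sum.inr (Sum.inl e) : V ⊕ (↥G.edgeSet ⊕ Fin D))) '' E₁ := by
      ext x
      constructor
      · rintro ⟨e, rfl, he⟩; exact ⟨e, he, rfl⟩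
      · rintro ⟨e, he, rfl⟩; exact ⟨e, rfl, he⟩
    have hT2 : {x : V ⊕ (↥G.edgeSet ⊕ Fin D) | ∃ d : Fin D, x = Sum.inr (Sum.inr d)}
        = (fun d : Fin D => (Sum.inr (Sum.inr d) : V ⊕ (↥G.edgeSet ⊕ Fin D))) '' Set.univ := by
      ext x
      constructor
      · rintro ⟨d, rfl⟩; exact ⟨d, trivial, rfl⟩
      · rintro ⟨d, _, rfl⟩; exact ⟨d, rfl⟩
    have hinj2 : Function.Injective
        (fun e : ↥G.edgeSet => (Sum.inr (Sum.inl e) : V ⊕ (↥G.edgeSet ⊕ Fin D))) := by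
      intro a b h; simpa using h
    have hinj3 : Function.Injective
        (fun d : Fin D => (Sum.inr (Sum.inr d) : V ⊕ (↥G.edgeSet ⊕ Fin D))) := by
      intro a b h; simpa using h
    have hdisjA : Disjoint {x : V ⊕ (↥G.edgeSet ⊕ Fin D) | ∃ v, x = Sum.inl v ∧ v ∉ C}
        {x : V ⊕ (↥G.edgeSet ⊕ Fin D) |
          ∃ e : ↥G.edgeSet, x = Sum.inr (Sum.inl e) ∧ ¬ ∀ v ∈ (e : Sym2 V), v ∈ C} := by
      rw [Set.disjoint_left]
      rintro x ⟨v, rfl, -⟩ ⟨e, he, -⟩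
      exact Sum.inl_ne_inr he
    have hdisjB : Disjoint {x : V ⊕ (↥G.edgeSet ⊕ Fin D) |
          ∃ e : ↥G.edgeSet, x = Sum.inr (Sum.inl e) ∧ ∀ v ∈ (e : Sym2 V), v ∈ C}
        {x : V ⊕ (↥G.edgeSet ⊕ Fin D) | ∃ d : Fin D, x = Sum.inr (Sum.inr d)} := by
      rw [Set.disjoint_left]
      rintro x ⟨e, rfl, -⟩ ⟨d, hd⟩
      simp at hd
    have hCc : Cᶜ.ncard = n - k := by
      have := Set.ncard_add_ncard_compl C
      rw [hCk] at this
      have hNc : Nat.card V = n := Nat.card_eq_fintype_card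
      omega
    have hE₁c : E₁ᶜ.ncard = m - Nat.choose k 2 := by
      have := Set.ncard_add_ncard_compl E₁
      rw [hE₁card] at this
      omega
    have hkn : k ≤ n := by
      have := Set.ncard_le_ncard (Set.subset_univ C) Set.finite_univ
      rw [hCk, Set.ncard_univ, Nat.card_eq_fintype_card] at this
      exact this
    have hc2m : Nat.choose k 2 ≤ m := by
      have := Set.ncard_le_ncard (Set.subset_univ E₁) Set.finite_univ
      rw [hE₁card, Set.ncard_univ] at this
      exact this
    rw [partA, partB, Set.ncard_union_eq hdisjA, Set.ncard_union_eq hdisjB,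
      hS1, hS2, hT1, hT2,
      Set.ncard_image_of_injective _ Sum.inl_injective,
      Set.ncard_image_of_injective _ hinj2,
      Set.ncard_image_of_injective _ hinj2,
      Set.ncard_image_of_injective _ hinj3,
      hCc, hE₁c, hE₁card, Set.ncard_univ, Nat.card_eq_fintype_card, Fintype.card_fin]
    omega
  · -- separator
    rintro a (⟨v, rfl, hv⟩ | ⟨e, rfl, he⟩) b (⟨f, rfl, hf⟩ | ⟨d, rfl⟩) hadj
    · exact hv (hf v hadj)
    · exact hadj
    · exact hadj
    · exact hadj
end
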